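/- Let A be a ring with identity and B any ring, and let (λ, ρ) be a bimultiplication on the product ring A × B. Then there exist a bimultiplication (λ_A, ρ_A) on A and a bimultiplication (λ_B, ρ_B) on B such that λ(a, b) = (λ_A(a), λ_B(b)) and ρ(a, b) = (ρ_A(a), ρ_B(b)) for all (a, b) ∈ A × B. -/
import Mathlib


/-- A bimultiplication on a product ring `A × B`, with `A` unital, splits into
a bimultiplication on `A` and a bimultiplication on `B`. -/
theorem bimultiplication_prod_splits {A B : Type*} [Ring A] [NonUnitalRing B]
    (lam rho : A × B →+ A × B)
    (hlam : ∀ x y : A × B, lam (x * y) = lam x * y)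
    (hrho : ∀ x y : A × B, rho (x * y) = x * rho y)
    (hmid : ∀ x y : A × B, x * lam y = rho x * y) :
    ∃ (lamA rhoA : A →+ A) (lamB rhoB : B →+ B),
      (∀ a b : A, lamA (a * b) = lamA a * b) ∧
      (∀ a b : A, rhoA (a * b) = a * rhoA b) ∧
      (∀ a b : A, a * lamA b = rhoA a * b) ∧
      (∀ a b : B, lamB (a * b) = lamB a * b) ∧
      (∀ a b : B, rhoB (a * b) = a * rhoB b) ∧
      (∀ a b : B, a * lamB b = rhoB a * b) ∧
      (∀ p : A × B, lam p = (lamA p.1, lamB p.2)) ∧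
      (∀ p : A × B, rho p = (rhoA p.1, rhoB p.2)) := by
  -- cross components vanish
  have h1 : ∀ a : A, (lam (a, 0)).2 = 0 := by
    intro a
    have := hlam (a, 0) (1, 0)
    simp only [Prod.mk_mul_mk, mul_one, mul_zero] at this
    have h2 := congrArg Prod.snd this
    simp only [Prod.snd_mul, mul_zero] at h2
    exact h2
  have h2 : ∀ b : B, (lam (0, b)).1 = 0 := by
    intro b
    have := hmid (1, 0) (0, b)
    have h := congrArg Prod.fst this
    simp only [Prod.fst_mul, one_mul, mul_zero] at h
    exact h
  have h3 : ∀ a : A, (rho (a, 0)).2 = 0 := by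
    intro a
    have := hrho (1, 0) ((1:A), 0)
    have h := congrArg Prod.snd (hrho (1, 0) (a, 0))
    simp only [Prod.mk_mul_mk, one_mul, zero_mul, Prod.snd_mul] at h
    rw [h]
  have h4 : ∀ b : B, (rho (0, b)).1 = 0 := by
    intro b
    have h := congrArg Prod.fst (hmid (0, b) (1, 0))
    simp only [Prod.fst_mul, zero_mul, mul_one] at h
    exact h.symm
  refine ⟨(AddMonoidHom.fst A B).comp (lam.comp (AddMonoidHom.inl A B)),
    (AddMonoidHom.fst A B).comp (rho.comp (AddMonoidHom.inl A B)),
    (AddMonoidHom.snd A B).comp (lam.comp (AddMonoidHom.inr A B)),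
    (AddMonoidHom.snd A B).comp (rho.comp (AddMonoidHom.inr A B)),
    ?_, ?_, ?_, ?_, ?_, ?_, ?_, ?_⟩ <;>
    simp only [AddMonoidHom.coe_comp, Function.comp_apply, AddMonoidHom.coe_fst,
      AddMonoidHom.coe_snd, AddMonoidHom.inl_apply, AddMonoidHom.inr_apply]
  · intro a b
    have h := congrArg Prod.fst (hlam (a, 0) (b, 0))
    simpa using h
  · intro a b
    have h := congrArg Prod.fst (hrho (a, 0) (b, 0))
    simpa using h
  · intro a b
    have h := congrArg Prod.fst (hmid (a, 0) (b, 0))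
    simpa using h
  · intro a b
    have h := congrArg Prod.snd (hlam (0, a) (0, b))
    simpa using h
  · intro a b
    have h := congrArg Prod.snd (hrho (0, a) (0, b))
    simpa using h
  · intro a b
    have h := congrArg Prod.snd (hmid (0, a) (0, b))
    simpa using h
  · intro p
    have hp : p = ((p.1, 0) : A × B) + (0, p.2) := by simp
    rw [hp, map_add]
    ext
    · simp [h2]
    · simp [h1]
  · intro p
    have hp : p = ((p.1, 0) : A × B) + (0, p.2) := by simp
    rw [hp, map_add]
    ext
    · simp [h4]
    · simp [h3]
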